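/- Fix n, m, k, d ∈ ℕ, a set Ω ⊆ {1,…,n}×{1,…,m}, matrices A ∈ ℝ^{n×m}, Y ∈ ℝ^{n×d}, and reals λ, γ > 0 and M > 0. Let U ∈ ℝ^{n×k}, V ∈ ℝ^{m×k}, and P ∈ ℝ^{n×n} satisfy: P is symmetric, P² = P, Tr(P) ≤ k, (I_n − P)U = 0, and ‖U Vᵀ‖_σ ≤ M. Then, setting X = U Vᵀ, there exist symmetric matrices W₁ ∈ ℝ^{n×n} and W₂ ∈ ℝ^{m×m} such that: (i) I_n − P and P are positive semidefinite and Tr(P) ≤ k; (ii) the block matrix [[M·P, X],[Xᵀ, M·I_m]] is positive semidefinite; (iii) the block matrix [[W₁, X],[Xᵀ, W₂]] is positive semidefinite; and (iv) (γ/2)(Tr(W₁)+Tr(W₂)) = γ‖X‖_* ≤ (γ/2)(‖U‖_F² + ‖V‖_F²). Consequently, ∑_{(i,j)∈Ω}(X_{ij}−A_{ij})² + λTr(Yᵀ(I_n−P)Y) + (γ/2)(Tr(W₁)+Tr(W₂)) ≤ ∑_{(i,j)∈Ω}((UVᵀ)_{ij}−A_{ij})² + λTr(Yᵀ(I_n−P)Y)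 + (γ/2)(‖U‖_F² + ‖V‖_F²). -/

import Mathlib

open Matrix

/-- The nuclear norm of a real matrix: the trace of the positive-semidefinite
square root of `Xᵀ * X` (i.e. the sum of the singular values of `X`). -/
noncomputable def nuclearNorm {n m : ℕ} (X : Matrix (Fin n) (Fin m) ℝ) : ℝ :=
  ((Matrix.posSemidef_conjTranspose_mul_self X).1.eigenvectorUnitary.1 *
    Matrix.diagonal (fun i => √((Matrix.posSemidef_conjTranspose_mul_self X).1.eigenvalues i)) *
    (star (Matrix.posSemidef_conjTranspose_mul_self X).1.eigenvectorUnitary :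
      Matrix (Fin m) (Fin m) ℝ)).trace

/-- The spectral norm of a real matrix: its ℓ²→ℓ² operator norm
(i.e. the largest singular value of `X`). -/
noncomputable def matSpectralNorm {n m : ℕ} (X : Matrix (Fin n) (Fin m) ℝ) : ℝ :=
  ‖LinearMap.toContinuousLinearMap (Matrix.toEuclideanLin X)‖


set_option linter.unusedSectionVars false
open Matrix

section Aux
variable {a b c e : Type*} [Fintype a] [Fintype b] [Fintype c] [Fintype e]

lemma conjT_eq_transpose (A : Matrix a b ℝ) : Aᴴ = Aᵀ := by
  ext i j; simp [conjTranspose_apply]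

lemma psd_vecMulVec (u : a → ℝ) : (vecMulVec u u).PosSemidef := by
  rw [posSemidef_iff_dotProduct_mulVec]
  constructor
  · ext i j; simp [conjTranspose_apply, vecMulVec_apply, mul_comm]
  · intro x
    have : vecMulVec u u *ᵥ x = (u ⬝ᵥ x) • u := by
      ext i
      simp only [mulVec, vecMulVec_apply, dotProduct, Pi.smul_apply, smul_eq_mul, Finset.mul_sum]
      rw [Finset.sum_mul]
      exact Finset.sum_congr rfl fun j _ => by ring
    rw [this]
    simp only [star_trivial, dotProduct_smul]
    have : x ⬝ᵥ u = u ⬝ᵥ x := dotProduct_comm _ _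
    rw [smul_eq_mul, this]
    exact mul_self_nonneg _

lemma psd_sum {ι : Type*} (s : Finset ι) (f : ι → Matrix a a ℝ)
    (h : ∀ i ∈ s, (f i).PosSemidef) : (∑ i ∈ s, f i).PosSemidef := by
  classical
  induction s using Finset.induction with
  | empty => simpa using Matrix.PosSemidef.zero
  | @insert i s hx ih =>
    rw [Finset.sum_insert hx]
    exact (h i (Finset.mem_insert_self i s)).add (ih fun j hj => h j (Finset.mem_insert_of_mem hj))

lemma mul_vecMulVec (A : Matrix a b ℝ) (u : b → ℝ) (v : c → ℝ) :
    A * vecMulVec u v = vecMulVec (A *ᵥ u) v := by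
  ext i j; simp [mul_apply, vecMulVec_apply, mulVec, dotProduct, Finset.sum_mul, mul_assoc]

lemma vecMulVec_mul_vecMulVec (u : a → ℝ) (v : b → ℝ) (w : b → ℝ) (z : c → ℝ) :
    vecMulVec u v * vecMulVec w z = (v ⬝ᵥ w) • vecMulVec u z := by
  ext i j
  simp [mul_apply, vecMulVec_apply, dotProduct, Finset.mul_sum, Finset.sum_mul]
  congr 1; ext l; ring

lemma trace_vecMulVec (u v : a → ℝ) : (vecMulVec u v).trace = u ⬝ᵥ v := by
  simp [Matrix.trace, Matrix.diag, vecMulVec_apply, dotProduct]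

lemma vecMulVec_elim (u : a → ℝ) (v : b → ℝ) (w : a → ℝ) (z : b → ℝ) :
    vecMulVec (Sum.elim u v) (Sum.elim w z) =
      fromBlocks (vecMulVec u w) (vecMulVec u z) (vecMulVec v w) (vecMulVec v z) := by
  ext i j
  cases i <;> cases j <;> simp [vecMulVec_apply, fromBlocks]

lemma trace_psd_nonneg {A : Matrix a a ℝ} [DecidableEq a] (hA : A.PosSemidef) : 0 ≤ A.trace := by
  refine Finset.sum_nonneg fun i _ => ?_
  have := hA.dotProduct_mulVec_nonneg (Pi.single i 1)
  simpa [dotProduct, mulVec, Pi.single_apply, Finset.sum_ite_eq', Finset.sum_ite_eq] using this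

end Aux

section Aux2
variable {a b c e : Type*} [Fintype a] [Fintype b] [Fintype c] [Fintype e]

lemma psd_smul {A : Matrix a a ℝ} (hA : A.PosSemidef) {t : ℝ} (ht : 0 ≤ t) :
    (t • A).PosSemidef := by
  refine posSemidef_iff_dotProduct_mulVec.mpr ⟨?_, fun x => ?_⟩
  · have := hA.1
    unfold Matrix.IsHermitian at *
    rw [conjTranspose_smul, this]
    simp
  · rw [smul_mulVec, dotProduct_smul, smul_eq_mul]
    exact mul_nonneg ht (hA.dotProduct_mulVec_nonneg x)

lemma sum_fromBlocks {ι : Type*} (s : Finset ι)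
    (f : ι → Matrix a b ℝ) (g : ι → Matrix a c ℝ) (h : ι → Matrix c b ℝ) (k : ι → Matrix c c ℝ) :
    (∑ i ∈ s, fromBlocks (f i) (g i) (h i) (k i)) =
      fromBlocks (∑ i ∈ s, f i) (∑ i ∈ s, g i) (∑ i ∈ s, h i) (∑ i ∈ s, k i) := by
  ext (i | i) (j | j) <;> simp [fromBlocks, Matrix.sum_apply]

lemma transpose_vecMulVec (u : a → ℝ) (v : b → ℝ) :
    (vecMulVec u v)ᵀ = vecMulVec v u := by
  ext i j; simp [vecMulVec_apply, mul_comm]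

lemma vecMulVec_smul_left (t : ℝ) (u : a → ℝ) (v : b → ℝ) :
    vecMulVec (t • u) v = t • vecMulVec u v := by
  ext i j; simp [vecMulVec_apply, mul_assoc]

lemma vecMulVec_smul_right (t : ℝ) (u : a → ℝ) (v : b → ℝ) :
    vecMulVec u (t • v) = t • vecMulVec u v := by
  ext i j; simp [vecMulVec_apply]; ring

lemma vecMulVec_zero_left (v : b → ℝ) : vecMulVec (0 : a → ℝ) v = 0 := by
  ext i j; simp [vecMulVec_apply]

lemma vecMulVec_mulVec_right (A : Matrix a b ℝ) (u : c → ℝ) (v : b → ℝ) :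
    vecMulVec u (A *ᵥ v) = vecMulVec u v * Aᵀ := by
  ext i j
  simp only [vecMulVec_apply, mulVec, mul_apply, dotProduct, Finset.mul_sum]
  exact Finset.sum_congr rfl fun l _ => by rw [transpose_apply]; ring

lemma trace_mul_proj_le [DecidableEq a] {S Q : Matrix a a ℝ} (hS : S.PosSemidef)
    (hQsym : Qᵀ = Q) (hQidem : Q * Q = Q) : (S * Q).trace ≤ S.trace := by
  have hQ2 : (1 - Q) * (1 - Q) = 1 - Q := by
    simp [sub_mul, mul_sub, hQidem]
  have hpsd : ((1 - Q)ᴴ * S * (1 - Q)).PosSemidef := hS.conjTranspose_mul_mul_same (1 - Q)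
  have hct : (1 - Q)ᴴ = 1 - Q := by
    rw [conjT_eq_transpose, transpose_sub, transpose_one, hQsym]
  rw [hct] at hpsd
  have h0 : 0 ≤ ((1 - Q) * S * (1 - Q)).trace := trace_psd_nonneg hpsd
  have h1 : ((1 - Q) * S * (1 - Q)).trace = (S * (1 - Q)).trace := by
    rw [trace_mul_cycle]
    rw [hQ2, trace_mul_comm]
  have h2 : (S * (1 - Q)).trace = S.trace - (S * Q).trace := by
    rw [Matrix.mul_sub, Matrix.mul_one, trace_sub]
  linarith [h0, h1 ▸ h0]


section Main

open Matrix in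
set_option maxHeartbeats 1000000 in
/-- Any feasible solution `(U, V, P)` of the mixed-projection problem yields a feasible
solution `(X, P, W₁, W₂)` of the semidefinite relaxation with no greater objective value. -/
theorem sdp_relaxation_feasible {n m k d : ℕ}
    (Ω : Finset (Fin n × Fin m))
    (A : Matrix (Fin n) (Fin m) ℝ) (Y : Matrix (Fin n) (Fin d) ℝ)
    (lam γ M : ℝ) (hlam : 0 < lam) (hγ : 0 < γ) (hM : 0 < M)
    (U : Matrix (Fin n) (Fin k) ℝ) (V : Matrix (Fin m) (Fin k) ℝ)
    (P : Matrix (Fin n) (Fin n) ℝ)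
    (hPsym : Pᵀ = P) (hPidem : P * P = P) (hPtr : P.trace ≤ (k : ℝ))
    (hPU : ((1 : Matrix (Fin n) (Fin n) ℝ) - P) * U = 0)
    (hXM : matSpectralNorm (U * Vᵀ) ≤ M)
    (X : Matrix (Fin n) (Fin m) ℝ) (hX : X = U * Vᵀ) :
    ∃ (W₁ : Matrix (Fin n) (Fin n) ℝ) (W₂ : Matrix (Fin m) (Fin m) ℝ),
      W₁ᵀ = W₁ ∧ W₂ᵀ = W₂ ∧
      ((1 : Matrix (Fin n) (Fin n) ℝ) - P).PosSemidef ∧ P.PosSemidef ∧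
      P.trace ≤ (k : ℝ) ∧
      (Matrix.fromBlocks (M • P) X Xᵀ (M • (1 : Matrix (Fin m) (Fin m) ℝ))).PosSemidef ∧
      (Matrix.fromBlocks W₁ X Xᵀ W₂).PosSemidef ∧
      (γ / 2) * (W₁.trace + W₂.trace) = γ * nuclearNorm X ∧
      γ * nuclearNorm X ≤ (γ / 2) * ((Uᵀ * U).trace + (Vᵀ * V).trace) ∧
      (∑ p ∈ Ω, (X p.1 p.2 - A p.1 p.2) ^ 2)
          + lam * (Yᵀ * ((1 : Matrix (Fin n) (Fin n) ℝ) - P) * Y).trace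
          + (γ / 2) * (W₁.trace + W₂.trace)
        ≤ (∑ p ∈ Ω, ((U * Vᵀ) p.1 p.2 - A p.1 p.2) ^ 2)
          + lam * (Yᵀ * ((1 : Matrix (Fin n) (Fin n) ℝ) - P) * Y).trace
          + (γ / 2) * ((Uᵀ * U).trace + (Vᵀ * V).trace) := by
  classical
  -- P and 1 - P are positive semidefinite
  have hPpsd : P.PosSemidef := by
    have h := posSemidef_conjTranspose_mul_self P
    rwa [conjT_eq_transpose, hPsym, hPidem] at h
  have hQsym : ((1 : Matrix (Fin n) (Fin n) ℝ) - P)ᵀ = 1 - P := by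
    rw [transpose_sub, transpose_one, hPsym]
  have hQidem : ((1 : Matrix (Fin n) (Fin n) ℝ) - P) * (1 - P) = 1 - P := by
    rw [Matrix.sub_mul, Matrix.one_mul, Matrix.mul_sub, Matrix.mul_one, hPidem]
    abel
  have hQpsd : ((1 : Matrix (Fin n) (Fin n) ℝ) - P).PosSemidef := by
    have h := posSemidef_conjTranspose_mul_self ((1 : Matrix (Fin n) (Fin n) ℝ) - P)
    rwa [conjT_eq_transpose, hQsym, hQidem] at h
  -- P * X = X
  have hPUeq : P * U = U := by
    have h : U - P * U = 0 := by
      have := hPU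
      rwa [Matrix.sub_mul, Matrix.one_mul] at this
    have := sub_eq_zero.mp h
    exact this.symm
  have hPX : P * X = X := by
    rw [hX, ← Matrix.mul_assoc, hPUeq]
  -- spectral norm bound, squared form
  have hXMle : matSpectralNorm X ≤ M := by rw [hX]; exact hXM
  have hkey : ∀ v : Fin m → ℝ, (X *ᵥ v) ⬝ᵥ (X *ᵥ v) ≤ M ^ 2 * (v ⬝ᵥ v) := by
    intro v
    set L := LinearMap.toContinuousLinearMap (Matrix.toEuclideanLin X) with hL
    set v' : EuclideanSpace ℝ (Fin m) := (WithLp.equiv 2 (Fin m → ℝ)).symm v with hv'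
    have h1 : ‖L v'‖ ≤ M * ‖v'‖ :=
      le_trans (L.le_opNorm v') (by
        apply mul_le_mul_of_nonneg_right hXMle (norm_nonneg _))
    have hLv : L v' = (WithLp.equiv 2 (Fin n → ℝ)).symm (X *ᵥ v) := by
      simp [hL, hv', Matrix.toEuclideanLin_apply]
    have hnorm1 : ‖L v'‖ ^ 2 = (X *ᵥ v) ⬝ᵥ (X *ᵥ v) := by
      rw [hLv, EuclideanSpace.norm_eq]
      rw [Real.sq_sqrt (Finset.sum_nonneg fun i _ => sq_nonneg _)]
      simp [dotProduct, sq]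
    have hnorm2 : ‖v'‖ ^ 2 = v ⬝ᵥ v := by
      rw [hv', EuclideanSpace.norm_eq]
      rw [Real.sq_sqrt (Finset.sum_nonneg fun i _ => sq_nonneg _)]
      simp [dotProduct, sq]
    have h2 : ‖L v'‖ ^ 2 ≤ (M * ‖v'‖) ^ 2 := by
      apply pow_le_pow_left₀ (norm_nonneg _) h1
    rw [hnorm1] at h2
    calc (X *ᵥ v) ⬝ᵥ (X *ᵥ v) ≤ (M * ‖v'‖) ^ 2 := h2
      _ = M ^ 2 * (v ⬝ᵥ v) := by rw [mul_pow, hnorm2]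
  -- PSD of the first block matrix
  have hMP : (Matrix.fromBlocks (M • P) X Xᵀ
      (M • (1 : Matrix (Fin m) (Fin m) ℝ))).PosSemidef := by
    rw [posSemidef_iff_dotProduct_mulVec]
    constructor
    · show _ = _
      rw [fromBlocks_conjTranspose]
      rw [conjT_eq_transpose (M • P), conjT_eq_transpose X, conjT_eq_transpose Xᵀ,
        conjT_eq_transpose (M • (1 : Matrix (Fin m) (Fin m) ℝ))]
      rw [transpose_smul, hPsym, transpose_transpose, transpose_smul, transpose_one]
    · intro x
      have hxe : x = Sum.elim (x ∘ Sum.inl) (x ∘ Sum.inr) := by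
        ext (i | i) <;> rfl
      set a := x ∘ Sum.inl with ha
      set bb := x ∘ Sum.inr with hbb2
      rw [star_trivial, hxe, fromBlocks_mulVec, sumElim_dotProduct_sumElim]
      rw [dotProduct_add, dotProduct_add]
      have e1 : a ⬝ᵥ (M • P) *ᵥ a = M * ((P *ᵥ a) ⬝ᵥ (P *ᵥ a)) := by
        rw [smul_mulVec, dotProduct_smul, smul_eq_mul]
        congr 1
        calc a ⬝ᵥ P *ᵥ a = a ⬝ᵥ (Pᵀ * P) *ᵥ a := by rw [hPsym, hPidem]
          _ = a ⬝ᵥ Pᵀ *ᵥ (P *ᵥ a) := by rw [mulVec_mulVec]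
          _ = (a ᵥ* Pᵀ) ⬝ᵥ (P *ᵥ a) := dotProduct_mulVec _ _ _
          _ = (P *ᵥ a) ⬝ᵥ (P *ᵥ a) := by rw [vecMul_transpose]
      have e2 : a ⬝ᵥ X *ᵥ bb = (P *ᵥ a) ⬝ᵥ (X *ᵥ bb) := by
        calc a ⬝ᵥ X *ᵥ bb = a ⬝ᵥ (Pᵀ * X) *ᵥ bb := by rw [hPsym, hPX]
          _ = a ⬝ᵥ Pᵀ *ᵥ (X *ᵥ bb) := by rw [mulVec_mulVec]
          _ = (a ᵥ* Pᵀ) ⬝ᵥ (X *ᵥ bb) := dotProduct_mulVec _ _ _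
          _ = (P *ᵥ a) ⬝ᵥ (X *ᵥ bb) := by rw [vecMul_transpose]
      have e3 : bb ⬝ᵥ Xᵀ *ᵥ a = (P *ᵥ a) ⬝ᵥ (X *ᵥ bb) := by
        rw [mulVec_transpose, dotProduct_comm, ← dotProduct_mulVec, e2]
      have e4 : bb ⬝ᵥ (M • (1 : Matrix (Fin m) (Fin m) ℝ)) *ᵥ bb = M * (bb ⬝ᵥ bb) := by
        rw [smul_mulVec, dotProduct_smul, smul_eq_mul, one_mulVec]
      simp only [Sum.elim_comp_inl, Sum.elim_comp_inr]
      rw [e1, e2, e3, e4]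
      set p := (P *ᵥ a) ⬝ᵥ (P *ᵥ a) with hp
      set q := bb ⬝ᵥ bb with hq
      set r := (X *ᵥ bb) ⬝ᵥ (X *ᵥ bb) with hr
      set t := (P *ᵥ a) ⬝ᵥ (X *ᵥ bb) with ht
      have hp0 : 0 ≤ p := Finset.sum_nonneg fun i _ => mul_self_nonneg _
      have hq0 : 0 ≤ q := Finset.sum_nonneg fun i _ => mul_self_nonneg _
      have hr0 : 0 ≤ r := Finset.sum_nonneg fun i _ => mul_self_nonneg _
      have hrM : r ≤ M ^ 2 * q := hkey bb
      have hcs : t ^ 2 ≤ p * r := by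
        have := Finset.sum_mul_sq_le_sq_mul_sq Finset.univ (fun i => (P *ᵥ a) i)
          (fun i => (X *ᵥ bb) i)
        calc t ^ 2 = (∑ i, (P *ᵥ a) i * (X *ᵥ bb) i) ^ 2 := by rw [ht]; rfl
          _ ≤ (∑ i, ((P *ᵥ a) i) ^ 2) * ∑ i, ((X *ᵥ bb) i) ^ 2 := this
          _ = p * r := by rw [hp, hr]; simp [dotProduct, sq]
      have ht2 : t ^ 2 ≤ M ^ 2 * p * q := by
        calc t ^ 2 ≤ p * r := hcs
          _ ≤ p * (M ^ 2 * q) := by apply mul_le_mul_of_nonneg_left hrM hp0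
          _ = M ^ 2 * p * q := by ring
      have hu : 0 ≤ M * p + M * q := by positivity
      have h4 : (2 * t) ^ 2 ≤ (M * p + M * q) ^ 2 := by
        nlinarith [ht2, sq_nonneg (M * p - M * q)]
      have h5 : |2 * t| ≤ |M * p + M * q| := by
        rw [← Real.sqrt_sq_eq_abs, ← Real.sqrt_sq_eq_abs]
        exact Real.sqrt_le_sqrt h4
      rw [abs_of_nonneg hu] at h5
      have h6 := neg_abs_le (2 * t)
      linarith

  -- spectral decomposition of Xᴴ * X
  have hGpsd : (Xᴴ * X).PosSemidef := Matrix.posSemidef_conjTranspose_mul_self X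
  have hGherm : (Xᴴ * X).IsHermitian := hGpsd.1
  set bv : Fin m → (Fin m → ℝ) := fun i => ⇑(hGherm.eigenvectorBasis i) with hbv
  set dd : Fin m → ℝ := hGherm.eigenvalues with hdd
  have hdd0 : ∀ i, 0 ≤ dd i := fun i => hGpsd.eigenvalues_nonneg i
  set s : Fin m → ℝ := fun i => Real.sqrt (dd i) with hsdef
  have hs0 : ∀ i, 0 ≤ s i := fun i => Real.sqrt_nonneg _
  have hss : ∀ i, s i * s i = dd i := fun i => Real.mul_self_sqrt (hdd0 i)
  have hsne : ∀ i, dd i ≠ 0 → s i ≠ 0 := by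
    intro i h hcontra
    exact h (by rw [← hss i, hcontra, mul_zero])
  have hGb : ∀ i, (Xᴴ * X) *ᵥ bv i = dd i • bv i := fun i => hGherm.mulVec_eigenvectorBasis i
  have hbb : ∀ i j, bv i ⬝ᵥ bv j = if i = j then 1 else 0 := by
    intro i j
    have h := (orthonormal_iff_ite (𝕜 := ℝ)).mp hGherm.eigenvectorBasis.orthonormal i j
    simp only [dotProduct, hbv]
    simpa [PiLp.inner_apply, RCLike.inner_apply, starRingEnd_apply, dotProduct, mul_comm] using h
  have hunit : (hGherm.eigenvectorUnitary : Matrix (Fin m) (Fin m) ℝ) *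
      star (hGherm.eigenvectorUnitary : Matrix (Fin m) (Fin m) ℝ) = 1 :=
    Matrix.mem_unitaryGroup_iff.mp (hGherm.eigenvectorUnitary).2
  have hBB : (∑ i, vecMulVec (bv i) (bv i)) = (1 : Matrix (Fin m) (Fin m) ℝ) := by
    ext j l
    have h2 : ((hGherm.eigenvectorUnitary : Matrix (Fin m) (Fin m) ℝ) *
        star (hGherm.eigenvectorUnitary : Matrix (Fin m) (Fin m) ℝ)) j l
        = (1 : Matrix (Fin m) (Fin m) ℝ) j l := by rw [hunit]
    rw [Matrix.sum_apply, ← h2]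
    simp only [Matrix.mul_apply, Matrix.star_apply, vecMulVec_apply, star_trivial,
      IsHermitian.eigenvectorUnitary_apply]
    rfl
  set cv : Fin m → (Fin n → ℝ) := fun i => X *ᵥ bv i with hcv
  have hcc : ∀ i j, cv i ⬝ᵥ cv j = if i = j then dd j else 0 := by
    intro i j
    calc cv i ⬝ᵥ cv j = (bv i ᵥ* Xᵀ) ⬝ᵥ cv j := by rw [vecMul_transpose]
      _ = bv i ⬝ᵥ (Xᵀ *ᵥ cv j) := (dotProduct_mulVec _ _ _).symm
      _ = bv i ⬝ᵥ ((Xᴴ * X) *ᵥ bv j) := by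
          rw [conjT_eq_transpose, ← mulVec_mulVec]
      _ = bv i ⬝ᵥ (dd j • bv j) := by rw [hGb j]
      _ = dd j * (bv i ⬝ᵥ bv j) := by rw [dotProduct_smul, smul_eq_mul]
      _ = if i = j then dd j else 0 := by rw [hbb i j]; split_ifs <;> simp
  have hc0 : ∀ i, dd i = 0 → cv i = 0 := by
    intro i h0
    have h1 : (∑ l, cv i l * cv i l) = 0 := by
      have := hcc i i
      rw [if_pos rfl, h0] at this
      exact this
    have h2 := (Finset.sum_eq_zero_iff_of_nonneg
      (fun l _ => mul_self_nonneg (cv i l))).mp h1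
    funext l
    exact mul_self_eq_zero.mp (h2 l (Finset.mem_univ l))
  have hXsum : X = ∑ i, vecMulVec (cv i) (bv i) := by
    calc X = X * (1 : Matrix (Fin m) (Fin m) ℝ) := (Matrix.mul_one X).symm
      _ = ∑ i, X * vecMulVec (bv i) (bv i) := by rw [← hBB, Matrix.mul_sum]
      _ = ∑ i, vecMulVec (cv i) (bv i) :=
          Finset.sum_congr rfl fun i _ => by rw [_root_.mul_vecMulVec]
  set W₂ : Matrix (Fin m) (Fin m) ℝ := ∑ i, s i • vecMulVec (bv i) (bv i) with hW₂
  set W₁ : Matrix (Fin n) (Fin n) ℝ :=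
    ∑ i, if dd i = 0 then 0 else (s i)⁻¹ • vecMulVec (cv i) (cv i) with hW₁
  have hGsum : Xᴴ * X = ∑ i, dd i • vecMulVec (bv i) (bv i) := by
    calc Xᴴ * X = (Xᴴ * X) * 1 := (Matrix.mul_one _).symm
      _ = ∑ i, (Xᴴ * X) * vecMulVec (bv i) (bv i) := by rw [← hBB, Matrix.mul_sum]
      _ = ∑ i, dd i • vecMulVec (bv i) (bv i) :=
          Finset.sum_congr rfl fun i _ => by
            rw [_root_.mul_vecMulVec, hGb i, vecMulVec_smul_left]
  have hterm : ∀ i j, (s i • vecMulVec (bv i) (bv i)) * (s j • vecMulVec (bv j) (bv j))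
      = if j = i then dd i • vecMulVec (bv i) (bv i) else 0 := by
    intro i j
    rw [smul_mul_assoc, mul_smul_comm, _root_.vecMulVec_mul_vecMulVec, hbb i j]
    by_cases h : i = j
    · subst h
      rw [if_pos rfl, if_pos rfl, one_smul, smul_smul, hss]
    · rw [if_neg h, if_neg (fun hh => h hh.symm), zero_smul, smul_zero, smul_zero]
  have hW₂sq : W₂ * W₂ = Xᴴ * X := by
    rw [hW₂, Finset.sum_mul_sum, hGsum]
    refine Finset.sum_congr rfl fun i _ => ?_
    rw [Finset.sum_congr rfl fun j _ => hterm i j]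
    simp
  have hW₂psd : W₂.PosSemidef := psd_sum _ _ fun i _ => psd_smul (psd_vecMulVec _) (hs0 i)
  have hnn : nuclearNorm X = W₂.trace := by
    have htr : W₂.trace = ∑ i, s i := by
      rw [hW₂, trace_sum]
      refine Finset.sum_congr rfl fun i _ => ?_
      rw [trace_smul, _root_.trace_vecMulVec, hbb i i, if_pos rfl, smul_eq_mul, mul_one]
    unfold nuclearNorm
    rw [htr, Matrix.trace_mul_comm, ← Matrix.mul_assoc,
      Matrix.mem_unitaryGroup_iff'.mp (hGherm.eigenvectorUnitary).2, Matrix.one_mul,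
      Matrix.trace_diagonal]
  have htrW₂ : W₂.trace = ∑ i, s i := by
    rw [hW₂, trace_sum]
    refine Finset.sum_congr rfl fun i _ => ?_
    rw [trace_smul, _root_.trace_vecMulVec, hbb i i, if_pos rfl, smul_eq_mul, mul_one]
  have htrW₁ : W₁.trace = ∑ i, s i := by
    rw [hW₁, trace_sum]
    refine Finset.sum_congr rfl fun i _ => ?_
    by_cases h : dd i = 0
    · rw [if_pos h]
      simp [hsdef, h]
    · rw [if_neg h, trace_smul, _root_.trace_vecMulVec, hcc i i, if_pos rfl, smul_eq_mul, ← hss i]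
      exact inv_mul_cancel_left₀ (hsne i h) (s i)
  have hW₁sym : W₁ᵀ = W₁ := by
    rw [hW₁, transpose_sum]
    refine Finset.sum_congr rfl fun i _ => ?_
    by_cases h : dd i = 0
    · simp [h]
    · simp [h, transpose_smul, _root_.transpose_vecMulVec]
  have hW₂sym : W₂ᵀ = W₂ := by
    rw [hW₂, transpose_sum]
    refine Finset.sum_congr rfl fun i _ => ?_
    rw [transpose_smul, _root_.transpose_vecMulVec]
  -- second block matrix is PSD
  set Z : Fin m → Matrix (Fin n ⊕ Fin m) (Fin n ⊕ Fin m) ℝ := fun i =>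
    if dd i = 0 then 0 else
      (s i)⁻¹ • vecMulVec (Sum.elim (cv i) (s i • bv i)) (Sum.elim (cv i) (s i • bv i)) with hZ
  have hZpsd : ∀ i, (Z i).PosSemidef := by
    intro i
    rw [hZ]
    dsimp only
    split_ifs
    · exact Matrix.PosSemidef.zero
    · exact psd_smul (psd_vecMulVec _) (inv_nonneg.mpr (hs0 i))
  have hZblock : ∀ i, Z i = Matrix.fromBlocks
      (if dd i = 0 then 0 else (s i)⁻¹ • vecMulVec (cv i) (cv i))
      (vecMulVec (cv i) (bv i)) (vecMulVec (bv i) (cv i))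
      (s i • vecMulVec (bv i) (bv i)) := by
    intro i
    by_cases h : dd i = 0
    · have hsz : s i = 0 := by rw [hsdef]; simp [h]
      have hz1 : vecMulVec (bv i) (0 : Fin n → ℝ) = 0 := by
        ext p q; simp [vecMulVec_apply]
      rw [hZ]
      dsimp only
      rw [if_pos h, if_pos h, hc0 i h, vecMulVec_zero_left, hz1, hsz, zero_smul,
        fromBlocks_zero]
    · rw [hZ]
      dsimp only
      rw [if_neg h, if_neg h, vecMulVec_elim, fromBlocks_smul,
        show (s i)⁻¹ • vecMulVec (cv i) (s i • bv i) = vecMulVec (cv i) (bv i) by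
          rw [vecMulVec_smul_right, smul_smul, inv_mul_cancel₀ (hsne i h), one_smul],
        show (s i)⁻¹ • vecMulVec (s i • bv i) (cv i) = vecMulVec (bv i) (cv i) by
          rw [vecMulVec_smul_left, smul_smul, inv_mul_cancel₀ (hsne i h), one_smul],
        show (s i)⁻¹ • vecMulVec (s i • bv i) (s i • bv i) = s i • vecMulVec (bv i) (bv i) by
          rw [vecMulVec_smul_left, vecMulVec_smul_right, smul_smul, smul_smul,
            inv_mul_cancel₀ (hsne i h), one_mul]]
  have hXT : Xᵀ = ∑ i, vecMulVec (bv i) (cv i) := by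
    rw [hXsum, transpose_sum]
    exact Finset.sum_congr rfl fun i _ => _root_.transpose_vecMulVec _ _
  have hblock2 : Matrix.fromBlocks W₁ X Xᵀ W₂ = ∑ i, Z i := by
    rw [Finset.sum_congr rfl fun i _ => hZblock i, sum_fromBlocks, ← hW₁, ← hW₂,
      ← hXsum, ← hXT]
  have hBpsd : (Matrix.fromBlocks W₁ X Xᵀ W₂).PosSemidef := by
    rw [hblock2]
    exact psd_sum _ _ fun i _ => hZpsd i
  -- nuclear norm at most half the sum of squared Frobenius norms
  set ev : Fin m → (Fin k → ℝ) := fun i => Vᵀ *ᵥ bv i with hev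
  set uv : Fin m → (Fin n → ℝ) := fun i => if dd i = 0 then 0 else (s i)⁻¹ • cv i with huv
  set fv : Fin m → (Fin k → ℝ) := fun i => Uᵀ *ᵥ uv i with hfv
  have hcU : ∀ i, cv i = U *ᵥ ev i := by
    intro i
    simp only [hcv, hev, hX, ← mulVec_mulVec]
  have h7a : ∀ i, s i ≤ (fv i ⬝ᵥ fv i + ev i ⬝ᵥ ev i) / 2 := by
    intro i
    have hffe : 0 ≤ fv i ⬝ᵥ fv i := Finset.sum_nonneg fun l _ => mul_self_nonneg _
    have heee : 0 ≤ ev i ⬝ᵥ ev i := Finset.sum_nonneg fun l _ => mul_self_nonneg _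
    by_cases h : dd i = 0
    · have hsz : s i = 0 := by rw [hsdef]; simp [h]
      rw [hsz]
      linarith
    · have hsi : s i = fv i ⬝ᵥ ev i := by
        have h1 : fv i ⬝ᵥ ev i = uv i ⬝ᵥ (U *ᵥ ev i) := by
          simp only [hfv]
          rw [mulVec_transpose, ← dotProduct_mulVec]
        rw [h1, ← hcU i]
        simp only [huv, if_neg h]
        rw [smul_dotProduct, hcc i i, if_pos rfl, smul_eq_mul, ← hss i]
        rw [inv_mul_cancel_left₀ (hsne i h)]
      have hsub : 0 ≤ (fv i - ev i) ⬝ᵥ (fv i - ev i) :=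
        Finset.sum_nonneg fun l _ => mul_self_nonneg _
      rw [sub_dotProduct, dotProduct_sub, dotProduct_sub] at hsub
      have hcomm : ev i ⬝ᵥ fv i = fv i ⬝ᵥ ev i := dotProduct_comm _ _
      rw [hsi]
      linarith
  have hveb : ∀ i, vecMulVec (ev i) (ev i) = Vᵀ * (vecMulVec (bv i) (bv i) * V) := by
    intro i
    simp only [hev]
    rw [← _root_.mul_vecMulVec, vecMulVec_mulVec_right, transpose_transpose]
  have h7b : ∑ i, ev i ⬝ᵥ ev i = (Vᵀ * V).trace := by
    calc ∑ i, ev i ⬝ᵥ ev i = ∑ i, (Vᵀ * (vecMulVec (bv i) (bv i) * V)).trace :=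
          Finset.sum_congr rfl fun i _ => by rw [← hveb i, _root_.trace_vecMulVec]
      _ = (∑ i, Vᵀ * (vecMulVec (bv i) (bv i) * V)).trace := (trace_sum _ _).symm
      _ = (Vᵀ * ((∑ i, vecMulVec (bv i) (bv i)) * V)).trace := by
          rw [Matrix.sum_mul, Matrix.mul_sum]
      _ = (Vᵀ * V).trace := by rw [hBB, Matrix.one_mul]
  -- the projection onto the left singular vectors
  set Qm : Matrix (Fin n) (Fin n) ℝ := ∑ i, vecMulVec (uv i) (uv i) with hQm
  have huu0 : ∀ i, dd i = 0 → uv i = 0 := by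
    intro i h
    simp only [huv, if_pos h]
  have huudot : ∀ i j, uv i ⬝ᵥ uv j = if i = j ∧ dd i ≠ 0 then 1 else 0 := by
    intro i j
    by_cases hi : dd i = 0
    · rw [huu0 i hi, zero_dotProduct, if_neg (by tauto)]
    · by_cases hj : dd j = 0
      · rw [huu0 j hj, dotProduct_zero,
          if_neg (fun hc => hc.2 (by rw [hc.1]; exact hj))]
      · simp only [huv, if_neg hi, if_neg hj]
        rw [smul_dotProduct, dotProduct_smul, hcc i j]
        by_cases hij : i = j
        · subst hij
          rw [if_pos rfl, if_pos ⟨rfl, hi⟩, smul_eq_mul, smul_eq_mul, ← hss i,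
            inv_mul_cancel_left₀ (hsne i hi), inv_mul_cancel₀ (hsne i hi)]
        · rw [if_neg hij, if_neg (by tauto), smul_eq_mul, smul_eq_mul, mul_zero, mul_zero]
  have huu : ∀ i j, vecMulVec (uv i) (uv i) * vecMulVec (uv j) (uv j)
      = if j = i then vecMulVec (uv i) (uv i) else 0 := by
    intro i j
    rw [_root_.vecMulVec_mul_vecMulVec, huudot i j]
    by_cases hij : j = i
    · subst hij
      by_cases h : dd j = 0
      · rw [if_neg (by tauto), zero_smul, if_pos rfl, huu0 j h, vecMulVec_zero_left]
      · rw [if_pos ⟨rfl, h⟩, if_pos rfl, one_smul]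
    · rw [if_neg (fun hc => hij hc.1.symm), if_neg hij, zero_smul]
  have hQidem2 : Qm * Qm = Qm := by
    rw [hQm, Finset.sum_mul_sum]
    trans (∑ i, ∑ j, if j = i then vecMulVec (uv i) (uv i) else 0)
    · exact Finset.sum_congr rfl fun i _ => Finset.sum_congr rfl fun j _ => huu i j
    · refine Finset.sum_congr rfl fun i _ => ?_
      simp
  have hQsym2 : Qmᵀ = Qm := by
    rw [hQm, transpose_sum]
    exact Finset.sum_congr rfl fun i _ => _root_.transpose_vecMulVec _ _
  have hvfu : ∀ i, vecMulVec (fv i) (fv i) = Uᵀ * (vecMulVec (uv i) (uv i) * U) := by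
    intro i
    simp only [hfv]
    rw [← _root_.mul_vecMulVec, vecMulVec_mulVec_right, transpose_transpose]
  have h7c : ∑ i, fv i ⬝ᵥ fv i ≤ (Uᵀ * U).trace := by
    have hSpsd : (U * Uᵀ).PosSemidef := by
      have h := posSemidef_self_mul_conjTranspose U
      rwa [conjT_eq_transpose] at h
    have heq : ∑ i, fv i ⬝ᵥ fv i = ((U * Uᵀ) * Qm).trace := by
      calc ∑ i, fv i ⬝ᵥ fv i = ∑ i, (Uᵀ * (vecMulVec (uv i) (uv i) * U)).trace :=
            Finset.sum_congr rfl fun i _ => by rw [← hvfu i, _root_.trace_vecMulVec]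
        _ = (Uᵀ * (Qm * U)).trace := by
            rw [hQm, Matrix.sum_mul, Matrix.mul_sum, trace_sum]
        _ = ((U * Uᵀ) * Qm).trace := by
            rw [← Matrix.mul_assoc, trace_mul_cycle]
    rw [heq]
    calc ((U * Uᵀ) * Qm).trace ≤ (U * Uᵀ).trace := trace_mul_proj_le hSpsd hQsym2 hQidem2
      _ = (Uᵀ * U).trace := trace_mul_comm _ _
  have h7 : ∑ i, s i ≤ ((Uᵀ * U).trace + (Vᵀ * V).trace) / 2 := by
    calc ∑ i, s i ≤ ∑ i, (fv i ⬝ᵥ fv i + ev i ⬝ᵥ ev i) / 2 :=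
          Finset.sum_le_sum fun i _ => h7a i
      _ = ((∑ i, fv i ⬝ᵥ fv i) + ∑ i, ev i ⬝ᵥ ev i) / 2 := by
          rw [← Finset.sum_div, Finset.sum_add_distrib]
      _ ≤ ((Uᵀ * U).trace + (Vᵀ * V).trace) / 2 := by linarith [h7c, h7b.le, h7b.ge]
  -- assemble
  refine ⟨W₁, W₂, hW₁sym, hW₂sym, hQpsd, hPpsd, hPtr, hMP, hBpsd, ?_, ?_, ?_⟩
  · rw [hnn, htrW₁, htrW₂]
    ring
  · rw [hnn, htrW₂]
    have h8 := mul_le_mul_of_nonneg_left h7 hγ.le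
    linarith
  · rw [← hX]
    have hle : (γ / 2) * (W₁.trace + W₂.trace)
        ≤ (γ / 2) * ((Uᵀ * U).trace + (Vᵀ * V).trace) := by
      rw [htrW₁, htrW₂]
      have h8 := mul_le_mul_of_nonneg_left h7 (by positivity : (0:ℝ) ≤ γ / 2)
      linarith
    linarith

end Main
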